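/- Let f : T² → T² be a minimal homeomorphism homotopic to the identity. Then f is not annular: there do not exist a lift f̃ of f, a constant M > 0 and a vector v ∈ S¹ of rational slope such that |⟨f̃ⁿ(z) - z, v⟩| ≤ M for all z ∈ ℝ² and all n ∈ ℤ. -/

import Mathlib

/-- The two-dimensional torus `T² = ℝ²/ℤ²`. -/
abbrev T2 := AddCircle (1 : ℝ) × AddCircle (1 : ℝ)

/-- The canonical projection `ℝ² → T²`. -/
noncomputable def proj (z : ℝ × ℝ) : T2 := ((z.1 : AddCircle (1 : ℝ)), (z.2 : AddCircle (1 : ℝ)))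

/-- The `n`-th iterate (for `n : ℤ`) of a homeomorphism, as a map. -/
def zIter {X : Type*} [TopologicalSpace X] (f : X ≃ₜ X) (n : ℤ) : X → X :=
  fun x => if 0 ≤ n then (⇑f)^[n.toNat] x else (⇑f.symm)^[(-n).toNat] x

lemma zIter_zero {X : Type*} [TopologicalSpace X] (f : X ≃ₜ X) (z : X) :
    zIter f 0 z = z := by simp [zIter]

lemma zIter_succ {X : Type*} [TopologicalSpace X] (f : X ≃ₜ X) (n : ℤ) (z : X) :
    f (zIter f n z) = zIter f (n + 1) z := by
  unfold zIter
  by_cases h : 0 ≤ n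
  · rw [if_pos h, if_pos (by omega)]
    have hnat : (n + 1).toNat = n.toNat + 1 := by omega
    rw [hnat, Function.iterate_succ_apply']
  · rw [if_neg h]
    have hm : (-n).toNat = (-(n + 1)).toNat + 1 := by omega
    rw [hm, Function.iterate_succ_apply', f.apply_symm_apply]
    by_cases h1 : 0 ≤ n + 1
    · have h0 : n + 1 = 0 := by omega
      rw [if_pos h1, h0]
      simp
    · rw [if_neg h1]

lemma zIter_translate {ft : (ℝ × ℝ) ≃ₜ (ℝ × ℝ)} {w : ℝ × ℝ}
    (hw : ∀ z, ft (z + w) = ft z + w) (n : ℤ) (z : ℝ × ℝ) :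
    zIter ft n (z + w) = zIter ft n z + w := by
  have hsymm : ∀ z, ft.symm (z + w) = ft.symm z + w := fun z =>
    ft.injective (by rw [ft.apply_symm_apply, hw, ft.apply_symm_apply])
  have hit : ∀ (g : ℝ × ℝ → ℝ × ℝ), (∀ z, g (z + w) = g z + w) →
      ∀ (m : ℕ) (z : ℝ × ℝ), g^[m] (z + w) = g^[m] z + w := by
    intro g hg m
    induction m with
    | zero => intro z; simp
    | succ k ih =>
      intro z
      rw [Function.iterate_succ_apply, Function.iterate_succ_apply, hg, ih]
  unfold zIter
  by_cases h : 0 ≤ n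
  · rw [if_pos h, if_pos h, hit _ hw]
  · rw [if_neg h, if_neg h, hit _ hsymm]

lemma exists_min_positive (v1 v2 : ℝ) (p q : ℤ) (hq : q ≠ 0)
    (hslope : (p : ℝ) * v1 + (q : ℝ) * v2 = 0) (hv1 : v1 ≠ 0) :
    ∃ c : ℝ, 0 < c ∧ (∃ m0 n0 : ℤ, (m0 : ℝ) * v1 + (n0 : ℝ) * v2 = c) ∧
      ∀ m n : ℤ, ∃ j : ℤ, (m : ℝ) * v1 + (n : ℝ) * v2 = (j : ℝ) * c := by
  have hqR : (q : ℝ) ≠ 0 := Int.cast_ne_zero.mpr hq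
  set r : ℝ := v1 / q with hrdef
  have hr : r ≠ 0 := div_ne_zero hv1 hqR
  have key : ∀ m n : ℤ, (m : ℝ) * v1 + (n : ℝ) * v2 = r * ((m * q - n * p : ℤ) : ℝ) := by
    intro m n
    rw [hrdef, div_mul_eq_mul_div, eq_div_iff hqR]
    push_cast
    linear_combination (n : ℝ) * hslope
  set d : ℕ := Int.gcd p q with hddef
  have hd : 0 < d := Int.gcd_pos_of_ne_zero_right p hq
  have hdR : (0 : ℝ) < (d : ℝ) := by exact_mod_cast hd
  have hdvd : ∀ m n : ℤ, (d : ℤ) ∣ m * q - n * p := fun m n =>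
    dvd_sub (Dvd.dvd.mul_left (Int.gcd_dvd_right p q) m) (Dvd.dvd.mul_left (Int.gcd_dvd_left p q) n)
  have hbez : (Int.gcdB p q) * q - (-(Int.gcdA p q)) * p = (d : ℤ) := by
    have h := Int.gcd_eq_gcd_ab p q
    linear_combination -h
  refine ⟨|r| * d, by positivity, ?_, ?_⟩
  · rcases lt_or_gt_of_ne hr with hneg | hpos
    · refine ⟨-(Int.gcdB p q), Int.gcdA p q, ?_⟩
      rw [key]
      have h2 : ((-(Int.gcdB p q)) * q - (Int.gcdA p q) * p : ℤ) = -(d : ℤ) := by linarith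
      rw [h2, abs_of_neg hneg]
      push_cast; ring
    · refine ⟨Int.gcdB p q, -(Int.gcdA p q), ?_⟩
      rw [key, hbez, abs_of_pos hpos]
      push_cast; ring
  · intro m n
    obtain ⟨s, hs⟩ := hdvd m n
    rcases lt_or_gt_of_ne hr with hneg | hpos
    · refine ⟨-s, ?_⟩
      rw [key, hs, abs_of_neg hneg]
      push_cast; ring
    · refine ⟨s, ?_⟩
      rw [key, hs, abs_of_pos hpos]
      push_cast; ring

/-- A minimal homeomorphism of `T²` homotopic to the identity is not annular: there are no
lift `ft` of `f`, constant `M > 0` and unit vector `v` of rational slope with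
`|⟨ftⁿ(z) - z, v⟩| ≤ M` for all `z ∈ ℝ²` and all `n ∈ ℤ`. -/
theorem minimal_not_annular
    (f : T2 ≃ₜ T2)
    (hmin : ∀ A : Set T2, IsClosed A → (⇑f) '' A = A → A = ∅ ∨ A = Set.univ)
    (hhomotopic : ∃ g : (ℝ × ℝ) ≃ₜ (ℝ × ℝ),
      (∀ z, proj (g z) = f (proj z)) ∧
      (∀ z : ℝ × ℝ, ∀ p : ℤ × ℤ, g (z + ((p.1 : ℝ), (p.2 : ℝ))) = g z + ((p.1 : ℝ), (p.2 : ℝ)))) :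
    ¬ ∃ (ft : (ℝ × ℝ) ≃ₜ (ℝ × ℝ)) (M : ℝ) (v : ℝ × ℝ),
      (∀ z, proj (ft z) = f (proj z)) ∧
      (∀ z : ℝ × ℝ, ∀ p : ℤ × ℤ, ft (z + ((p.1 : ℝ), (p.2 : ℝ))) = ft z + ((p.1 : ℝ), (p.2 : ℝ))) ∧
      0 < M ∧ v.1 ^ 2 + v.2 ^ 2 = 1 ∧
      (∃ p q : ℤ, (p, q) ≠ (0, 0) ∧ (p : ℝ) * v.1 + (q : ℝ) * v.2 = 0) ∧
      (∀ z : ℝ × ℝ, ∀ n : ℤ,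
        |(zIter ft n z - z).1 * v.1 + (zIter ft n z - z).2 * v.2| ≤ M) := by
  rintro ⟨ft, M, v, hlift, hper, hM, hv, ⟨p, q, hpq, hslope⟩, hbdd⟩
  clear hhomotopic
  set φ : ℝ × ℝ → ℝ := fun z => z.1 * v.1 + z.2 * v.2 with hφdef
  have hφcont : Continuous φ := by fun_prop
  have hφsub : ∀ z w : ℝ × ℝ, φ (z - w) = φ z - φ w := by
    intro z w; simp only [hφdef, Prod.fst_sub, Prod.snd_sub]; ring
  have hφadd : ∀ z w : ℝ × ℝ, φ (z + w) = φ z + φ w := by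
    intro z w; simp only [hφdef, Prod.fst_add, Prod.snd_add]; ring
  -- the displacement bound in terms of φ
  have hbddφ : ∀ (z : ℝ × ℝ) (n : ℤ), |φ (zIter ft n z) - φ z| ≤ M := by
    intro z n
    have h := hbdd z n
    rw [← hφsub]
    exact h
  -- discreteness of the set of values of φ on ℤ²
  obtain ⟨c, hc, ⟨w0, hw0⟩, hcmul⟩ :
      ∃ c : ℝ, 0 < c ∧ (∃ w0 : ℤ × ℤ, φ ((w0.1 : ℝ), (w0.2 : ℝ)) = c) ∧
        ∀ w : ℤ × ℤ, ∃ j : ℤ, φ ((w.1 : ℝ), (w.2 : ℝ)) = (j : ℝ) * c := by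
    by_cases hq : q ≠ 0
    · have hv1 : v.1 ≠ 0 := by
        intro h
        rw [h, mul_zero, zero_add] at hslope
        rcases mul_eq_zero.mp hslope with h' | h'
        · exact hq (Int.cast_eq_zero.mp h')
        · rw [h, h'] at hv; norm_num at hv
      obtain ⟨c, hc, ⟨m0, n0, h0⟩, hall⟩ := exists_min_positive v.1 v.2 p q hq hslope hv1
      exact ⟨c, hc, ⟨(m0, n0), h0⟩, fun w => hall w.1 w.2⟩
    · push_neg at hq
      have hp : p ≠ 0 := by
        intro h; exact hpq (by rw [h, hq])
      have hv2 : v.2 ≠ 0 := by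
        intro h
        rw [h, mul_zero, add_zero] at hslope
        rcases mul_eq_zero.mp hslope with h' | h'
        · exact hp (Int.cast_eq_zero.mp h')
        · rw [h, h'] at hv; norm_num at hv
      have hslope' : (q : ℝ) * v.2 + (p : ℝ) * v.1 = 0 := by linarith
      obtain ⟨c, hc, ⟨m0, n0, h0⟩, hall⟩ := exists_min_positive v.2 v.1 q p hp hslope' hv2
      refine ⟨c, hc, ⟨(n0, m0), ?_⟩, fun w => ?_⟩
      · show (n0 : ℝ) * v.1 + (m0 : ℝ) * v.2 = c
        linarith
      · obtain ⟨j, hj⟩ := hall w.2 w.1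
        exact ⟨j, by show (w.1 : ℝ) * v.1 + (w.2 : ℝ) * v.2 = (j : ℝ) * c; linarith⟩
  -- the basic sets
  set H : ℝ → Set (ℝ × ℝ) := fun t => {z | φ z < t} with hHdef
  set B : ℝ → Set (ℝ × ℝ) := fun t => ⋃ n : ℤ, zIter ft n '' H t with hBdef
  set A : ℝ → Set (ℝ × ℝ) := fun t => closure (B t) with hAdef
  set F : ℝ → Set (ℝ × ℝ) := fun t => frontier (A t) with hFdef
  set E : Set (ℝ × ℝ) := ⋃ k : ℤ, F ((k : ℝ) * c) with hEdef
  have hHopen : ∀ t, IsOpen (H t) := fun t => isOpen_lt hφcont continuous_const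
  have hHB : ∀ t, H t ⊆ B t := fun t z hz =>
    Set.mem_iUnion.mpr ⟨0, ⟨z, hz, zIter_zero ft z⟩⟩
  have hAclosed : ∀ t, IsClosed (A t) := fun t => isClosed_closure
  have hBle : ∀ t, B t ⊆ {z | φ z ≤ t + M} := by
    intro t z' hz'
    obtain ⟨n, z, hz, rfl⟩ : ∃ n z, z ∈ H t ∧ zIter ft n z = z' := by
      simpa [hBdef] using hz'
    have hb := hbddφ z n
    have hzt : φ z < t := hz
    have := abs_le.mp hb
    show φ (zIter ft n z) ≤ t + M
    linarith [this.2]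
  have hAle : ∀ t, A t ⊆ {z | φ z ≤ t + M} := fun t =>
    closure_minimal (hBle t) (isClosed_le hφcont continuous_const)
  have hHintA : ∀ t, H t ⊆ interior (A t) := fun t =>
    interior_maximal ((hHB t).trans subset_closure) (hHopen t)
  have hFsub : ∀ t, F t ⊆ {z | t ≤ φ z ∧ φ z ≤ t + M} := by
    intro t z hz
    have hz1 : z ∈ A t := (hAclosed t).frontier_subset hz
    refine ⟨?_, hAle t hz1⟩
    by_contra hlt
    push_neg at hlt
    exact hz.2 (hHintA t hlt)
  have hFclosed : ∀ t, IsClosed (F t) := fun t => isClosed_frontier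
  -- invariance under ft
  have hftB : ∀ t, ⇑ft '' B t = B t := by
    intro t
    have h1 : ∀ n : ℤ, ⇑ft '' (zIter ft n '' H t) = zIter ft (n + 1) '' H t := by
      intro n
      rw [← Set.image_comp]
      have hfun : (⇑ft ∘ zIter ft n) = zIter ft (n + 1) := funext (zIter_succ ft n)
      rw [hfun]
    have hsurj1 : Function.Surjective (fun n : ℤ => n + 1) := fun m => ⟨m - 1, by ring⟩
    calc ⇑ft '' B t = ⋃ n : ℤ, ⇑ft '' (zIter ft n '' H t) := by
          rw [hBdef]; exact Set.image_iUnion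
      _ = ⋃ n : ℤ, zIter ft (n + 1) '' H t := by simp_rw [h1]
      _ = ⋃ n : ℤ, zIter ft n '' H t := hsurj1.iUnion_comp (fun n => zIter ft n '' H t)
      _ = B t := by rw [hBdef]
  have hftA : ∀ t, ⇑ft '' A t = A t := by
    intro t
    simp only [hAdef]
    rw [Homeomorph.image_closure, hftB]
  have hftF : ∀ t, ⇑ft '' F t = F t := by
    intro t
    simp only [hFdef]
    rw [Homeomorph.image_frontier, hftA]
  have hftE : ⇑ft '' E = E := by
    rw [hEdef, Set.image_iUnion]
    simp_rw [hftF]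
  -- invariance under integer translations
  have htransH : ∀ (t : ℝ) (u : ℝ × ℝ), (fun z => z + u) '' H t = H (t + φ u) := by
    intro t u
    ext z
    constructor
    · rintro ⟨x, hx, rfl⟩
      show φ (x + u) < t + φ u
      rw [hφadd]
      have : φ x < t := hx
      linarith
    · intro hz
      have hz' : φ z < t + φ u := hz
      exact ⟨z - u, by show φ (z - u) < t; rw [hφsub]; linarith, by simp⟩
  have htransB : ∀ (t : ℝ) (w : ℤ × ℤ),
      (fun z => z + ((w.1 : ℝ), (w.2 : ℝ))) '' B t = B (t + φ ((w.1 : ℝ), (w.2 : ℝ))) := by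
    intro t w
    set u : ℝ × ℝ := ((w.1 : ℝ), (w.2 : ℝ)) with hudef
    have hw : ∀ z, ft (z + u) = ft z + u := fun z => hper z w
    have h2 : ∀ n : ℤ, (fun z => z + u) '' (zIter ft n '' H t) = zIter ft n '' H (t + φ u) := by
      intro n
      rw [← Set.image_comp]
      have hcomp : ((fun z => z + u) ∘ zIter ft n) = (zIter ft n ∘ (fun z => z + u)) := by
        funext z
        exact (zIter_translate hw n z).symm
      rw [hcomp, Set.image_comp, htransH]
    calc (fun z => z + u) '' B t = ⋃ n : ℤ, (fun z => z + u) '' (zIter ft n '' H t) := by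
          rw [hBdef]; exact Set.image_iUnion
      _ = ⋃ n : ℤ, zIter ft n '' H (t + φ u) := by simp_rw [h2]
      _ = B (t + φ u) := by rw [hBdef]
  have htransF : ∀ (t : ℝ) (w : ℤ × ℤ),
      (fun z => z + ((w.1 : ℝ), (w.2 : ℝ))) '' F t = F (t + φ ((w.1 : ℝ), (w.2 : ℝ))) := by
    intro t w
    set u : ℝ × ℝ := ((w.1 : ℝ), (w.2 : ℝ)) with hudef
    have hT : (fun z : ℝ × ℝ => z + u) = ⇑(Homeomorph.addRight u) := rfl
    simp only [hFdef, hAdef]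
    rw [hT, Homeomorph.image_frontier, Homeomorph.image_closure, ← hT, htransB]
  have hEtrans : ∀ (w : ℤ × ℤ) (z : ℝ × ℝ), z ∈ E → z + ((w.1 : ℝ), (w.2 : ℝ)) ∈ E := by
    intro w z hz
    rw [hEdef] at hz ⊢
    obtain ⟨k, hk⟩ := Set.mem_iUnion.mp hz
    obtain ⟨j, hj⟩ := hcmul w
    apply Set.mem_iUnion.mpr ⟨k + j, ?_⟩
    have : z + ((w.1 : ℝ), (w.2 : ℝ)) ∈ F ((k : ℝ) * c + φ ((w.1 : ℝ), (w.2 : ℝ))) := by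
      rw [← htransF]
      exact ⟨z, hk, rfl⟩
    rw [hj] at this
    have heq : (k : ℝ) * c + (j : ℝ) * c = ((k + j : ℤ) : ℝ) * c := by push_cast; ring
    rwa [heq] at this
  -- E is closed
  have hEclosed : IsClosed E := by
    rw [hEdef]
    apply LocallyFinite.isClosed_iUnion
    · intro z
      refine ⟨φ ⁻¹' Set.Ioo (φ z - 1) (φ z + 1),
        (isOpen_Ioo.preimage hφcont).mem_nhds (by simp), ?_⟩
      apply Set.Finite.subset (Set.finite_Icc ⌈(φ z - 1 - M) / c⌉ ⌊(φ z + 1) / c⌋)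
      rintro k ⟨y, hy1, hy2⟩
      obtain ⟨hk1, hk2⟩ := hFsub _ hy1
      obtain ⟨hy3, hy4⟩ := hy2
      constructor
      · rw [Int.ceil_le, div_le_iff₀ hc]
        linarith
      · rw [Int.le_floor, le_div_iff₀ hc]
        linarith
    · exact fun k => hFclosed _
  -- E is nonempty
  have hF0ne : (F 0).Nonempty := by
    by_contra h
    rw [Set.not_nonempty_iff_eq_empty] at h
    have hclopen : IsClopen (A 0) := isClopen_iff_frontier_eq_empty.mpr h
    rcases isClopen_iff.mp hclopen with h0 | h0
    · have : (-v.1, -v.2) ∈ A 0 := subset_closure (hHB 0 (by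
        show φ (-v.1, -v.2) < 0
        show -v.1 * v.1 + -v.2 * v.2 < 0
        nlinarith))
      rw [h0] at this
      exact this
    · have : ((M + 1) * v.1, (M + 1) * v.2) ∈ A 0 := h0 ▸ Set.mem_univ _
      have h2 := hAle 0 this
      have h3 : φ ((M + 1) * v.1, (M + 1) * v.2) ≤ 0 + M := h2
      have h4 : (M + 1) * v.1 * v.1 + (M + 1) * v.2 * v.2 ≤ 0 + M := h3
      nlinarith
  have hEne : E.Nonempty := by
    obtain ⟨z, hz⟩ := hF0ne
    refine ⟨z, Set.mem_iUnion.mpr ⟨0, ?_⟩⟩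
    simpa using hz
  -- E is not everything (Baire)
  have hmeagre : IsMeagre E := by
    rw [isMeagre_iff_countable_union_isNowhereDense]
    refine ⟨Set.range (fun k : ℤ => F ((k : ℝ) * c)), ?_, Set.countable_range _, ?_⟩
    · rintro t ⟨k, rfl⟩
      rw [(hFclosed _).isNowhereDense_iff]
      exact interior_frontier (hAclosed _)
    · rw [Set.sUnion_range]
  obtain ⟨z0, hz0⟩ : ∃ z0, z0 ∉ E := (dense_of_mem_residual hmeagre).nonempty
  -- the projection
  have hproj_open : IsOpenMap proj := by
    have hpm : proj = Prod.map (fun x : ℝ => (x : AddCircle (1 : ℝ)))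
        (fun x : ℝ => (x : AddCircle (1 : ℝ))) := rfl
    rw [hpm]
    exact IsOpenMap.prodMap QuotientAddGroup.isOpenMap_coe QuotientAddGroup.isOpenMap_coe
  have hproj_surj : Function.Surjective proj := by
    intro t
    obtain ⟨x1, hx1⟩ := QuotientAddGroup.mk_surjective t.1
    obtain ⟨x2, hx2⟩ := QuotientAddGroup.mk_surjective t.2
    exact ⟨(x1, x2), Prod.ext hx1 hx2⟩
  have hfiber : ∀ y z : ℝ × ℝ, proj y = proj z → ∃ w : ℤ × ℤ, z = y + ((w.1 : ℝ), (w.2 : ℝ)) := by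
    intro y z h
    rw [Prod.ext_iff] at h
    have h1 := QuotientAddGroup.eq.mp h.1
    have h2 := QuotientAddGroup.eq.mp h.2
    obtain ⟨k1, hk1⟩ := AddSubgroup.mem_zmultiples_iff.mp h1
    obtain ⟨k2, hk2⟩ := AddSubgroup.mem_zmultiples_iff.mp h2
    rw [zsmul_eq_mul, mul_one] at hk1 hk2
    refine ⟨(k1, k2), ?_⟩
    have hz1 : z.1 = y.1 + (k1 : ℝ) := by linarith
    have hz2 : z.2 = y.2 + (k2 : ℝ) := by linarith
    refine Prod.ext ?_ ?_
    · simpa using hz1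
    · simpa using hz2
  -- the invariant set on the torus
  set K : Set T2 := proj '' E with hKdef
  have hcompl : (proj '' E)ᶜ = proj '' Eᶜ := by
    ext t
    constructor
    · intro ht
      obtain ⟨z, rfl⟩ := hproj_surj t
      exact ⟨z, fun hz => ht ⟨z, hz, rfl⟩, rfl⟩
    · rintro ⟨z, hz, rfl⟩ ⟨e, he, heq⟩
      obtain ⟨w, rfl⟩ := hfiber e z heq
      exact hz (hEtrans w e he)
  have hKclosed : IsClosed K := by
    rw [hKdef, ← isOpen_compl_iff, hcompl]
    exact hproj_open _ hEclosed.isOpen_compl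
  have hfK : ⇑f '' K = K := by
    rw [hKdef]
    calc ⇑f '' (proj '' E) = proj '' (⇑ft '' E) := by
          rw [← Set.image_comp, ← Set.image_comp]
          apply Set.image_congr'
          intro z
          exact (hlift z).symm
      _ = proj '' E := by rw [hftE]
  have hKne : K.Nonempty := hEne.image _
  have hKnotuniv : K ≠ Set.univ := by
    intro h
    have : proj z0 ∈ K := h ▸ Set.mem_univ _
    obtain ⟨e, he, heq⟩ := this
    obtain ⟨w, rfl⟩ := hfiber e z0 heq
    exact hz0 (hEtrans w e he)
  rcases hmin K hKclosed hfK with h | h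
  · exact hKne.ne_empty h
  · exact hKnotuniv h
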